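/- Let I be a finite type with a distinguished element e and an involution j ↦ j∨ on I fixing e. Let S be a symmetric I-by-I matrix over ℂ, set dim j := S e j, and assume dim j ≠ 0 for all j and dim e = 1. Suppose the fusion coefficients N : I → I → I → ℂ satisfy the Verlinde formula S i k * S j k = dim k * ∑_p N i j p * S p k for all i, j, k, and that N i j e = 1 if j = i∨ and N i j e = 0 otherwise. If d̂ : I → ℂ satisfies ∑_j d̂ j * S j i = (1 if i = e else 0) for all i, then d̂ j ≠ 0 for every j ∈ I; in particular d̂ e ≠ 0. -/
import Mathlib


open Matrix BigOperators

/-- If `S d̂ = δ_e` then every entry of `d̂` is nonzero; in particular `d̂ e ≠ 0`. -/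
theorem stmt_2 {I : Type*} [Fintype I] [DecidableEq I]
    (e : I) (v : I → I) (hv : Function.Involutive v) (hve : v e = e)
    (S : Matrix I I ℂ) (hS : S.IsSymm)
    (hdim : ∀ j, S e j ≠ 0) (hde : S e e = 1)
    (N : I → I → I → ℂ)
    (hVer : ∀ i j k, S i k * S j k = S e k * ∑ p, N i j p * S p k)
    (hNe : ∀ i j, N i j e = if j = v i then 1 else 0)
    (dhat : I → ℂ)
    (hd : ∀ i, ∑ j, dhat j * S j i = if i = e then 1 else 0) :
    (∀ j, dhat j ≠ 0) ∧ dhat e ≠ 0 := by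
  have hSsymm : ∀ a b, S a b = S b a := fun a b => by
    conv_lhs => rw [← hS]
    rfl
  set Y : Matrix I I ℂ := Matrix.diagonal (fun k => dhat k / S e k) with hY
  set C : Matrix I I ℂ := Matrix.of (fun i j => if j = v i then (1:ℂ) else 0) with hC
  have hSYS : S * Y * S = C := by
    ext i j
    have h1 : (S * Y * S) i j = ∑ k, S i k * (dhat k / S e k) * S k j := by
      rw [Matrix.mul_apply]
      apply Finset.sum_congr rfl
      intro k _
      rw [Matrix.mul_diagonal]
    rw [h1]
    have h2 : ∀ k, S i k * (dhat k / S e k) * S k j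
        = dhat k * ∑ p, N i j p * S p k := by
      intro k
      rw [hSsymm k j]
      calc S i k * (dhat k / S e k) * S j k
          = dhat k * (S i k * S j k) / S e k := by ring
        _ = dhat k * (S e k * ∑ p, N i j p * S p k) / S e k := by rw [hVer i j k]
        _ = dhat k * ∑ p, N i j p * S p k := by
            rw [mul_comm (S e k), ← mul_assoc, mul_div_assoc, div_self (hdim k), mul_one]
    rw [Finset.sum_congr rfl fun k _ => h2 k]
    have h3 : ∑ k, dhat k * ∑ p, N i j p * S p k
        = ∑ p, N i j p * ∑ k, dhat k * S k p := by
      simp_rw [Finset.mul_sum]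
      rw [Finset.sum_comm]
      apply Finset.sum_congr rfl
      intro p _
      apply Finset.sum_congr rfl
      intro k _
      rw [hSsymm p k]
      ring
    rw [h3]
    have h4 : ∑ p, N i j p * ∑ k, dhat k * S k p = N i j e := by
      rw [Finset.sum_congr rfl fun p _ => by rw [hd p]]
      simp
    rw [h4, hNe]
    rfl
  have hCC : C * C = 1 := by
    ext i j
    simp only [hC, Matrix.mul_apply, Matrix.of_apply]
    rw [Finset.sum_eq_single (v i)]
    · simp [hv i, Matrix.one_apply, eq_comm]
    · intro b _ hb; simp [hb]
    · simp
  have hdetC : C.det ≠ 0 := by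
    intro h
    have : (C * C).det = 1 := by rw [hCC, Matrix.det_one]
    rw [Matrix.det_mul, h, mul_zero] at this
    exact zero_ne_one this
  have hdetY : Y.det ≠ 0 := by
    intro h
    apply hdetC
    rw [← hSYS, Matrix.det_mul, Matrix.det_mul, h, mul_zero, zero_mul]
  have hYd : Y.det = ∏ k, (dhat k / S e k) := Matrix.det_diagonal
  have key : ∀ j, dhat j ≠ 0 := by
    intro j hj
    apply hdetY
    rw [hYd]
    apply Finset.prod_eq_zero (Finset.mem_univ j)
    rw [hj, zero_div]
  exact ⟨key, key e⟩
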